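/- Let a ∈ C^∞(ℝ^n × ℝ^n × Γ; ℂ) vanish whenever x ∉ K, and suppose that for all multi-indices α ∈ ℕ^n (in ξ), β ∈ ℕ^q (in μ) and every compact L ⊆ Γ there is a constant C with |∂_ξ^α ∂_μ^β a(x,ξ,μ)| ≤ C (1+|ξ|²+|μ|²)^{(m−|α|−|β|)/2} for all x ∈ K, ξ ∈ ℝ^n and μ ∈ L^c. Then F(μ) := ∫_{ℝ^n} ∫_{ℝ^n} a(x,ξ,μ) dx dξ converges absolutely for every μ ∈ Γ, F is a smooth function on Γ, and for every multi-index β ∈ ℕ^q and every compact L ⊆ Γ there is a constant C' with |∂^β F(μ)| ≤ C' (1+|μ|)^{m+n−|β|} for all μ ∈ L^c. -/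

import Mathlib

open MeasureTheory

noncomputable section


open MeasureTheory Set Function Metric Real

noncomputable section

namespace Stmt5Aux

variable {Q W V : Type} [NormedAddCommGroup Q] [NormedSpace ℝ Q]
  [NormedAddCommGroup W] [NormedSpace ℝ W]
  [NormedAddCommGroup V] [NormedSpace ℝ V]

/-- Iterated derivative (within an open set) of a composition with an affine map. -/
theorem iteratedFDerivWithin_comp_affine {f : W → V} {s : Set W} (hs : IsOpen s)
    (hf : ContDiffOn ℝ (⊤ : ℕ∞) f s) (c : W) (L : Q →L[ℝ] W) (i : ℕ) :
    ∀ x ∈ (fun ν => c + L ν) ⁻¹' s,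
      iteratedFDerivWithin ℝ i (fun ν => f (c + L ν)) ((fun ν => c + L ν) ⁻¹' s) x =
        (iteratedFDerivWithin ℝ i f s (c + L x)).compContinuousLinearMap fun _ => L := by
  have hg : Continuous fun ν : Q => c + L ν := continuous_const.add L.continuous
  have hto : IsOpen ((fun ν : Q => c + L ν) ⁻¹' s) := hs.preimage hg
  have htu : UniqueDiffOn ℝ ((fun ν : Q => c + L ν) ⁻¹' s) := hto.uniqueDiffOn
  have hsu : UniqueDiffOn ℝ s := hs.uniqueDiffOn
  induction i with
  | zero =>
    intro x hx
    ext m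
    simp
  | succ i IH =>
    intro x hx
    ext m
    rw [ContinuousMultilinearMap.compContinuousLinearMap_apply,
      iteratedFDerivWithin_succ_apply_left, iteratedFDerivWithin_succ_apply_left]
    have hf' : ContDiffOn ℝ ((i+1 : ℕ) : ℕ∞) f s := hf.of_le (by exact_mod_cast le_top)
    have hdiff : DifferentiableWithinAt ℝ (iteratedFDerivWithin ℝ i f s) s (c + L x) :=
      (hf'.differentiableOn_iteratedFDerivWithin (by exact_mod_cast lt_add_one i) hsu) _ hx
    have hgd : HasFDerivWithinAt (fun ν : Q => c + L ν) L ((fun ν : Q => c + L ν) ⁻¹' s) x :=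
      ((L.hasFDerivAt.const_add c).hasFDerivWithinAt)
    have hcomp : HasFDerivWithinAt (fun ν => iteratedFDerivWithin ℝ i f s (c + L ν))
        ((fderivWithin ℝ (iteratedFDerivWithin ℝ i f s) s (c + L x)).comp L)
        ((fun ν : Q => c + L ν) ⁻¹' s) x :=
      (hdiff.hasFDerivWithinAt.comp x hgd (fun y hy => hy))
    set Φ : ContinuousMultilinearMap ℝ (fun _ : Fin i => W) V →L[ℝ]
        ContinuousMultilinearMap ℝ (fun _ : Fin i => Q) V :=
      ContinuousMultilinearMap.compContinuousLinearMapL (fun _ : Fin i => L) with hΦ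
    have hcomp2 : HasFDerivWithinAt
        (fun ν => Φ (iteratedFDerivWithin ℝ i f s (c + L ν)))
        (Φ.comp ((fderivWithin ℝ (iteratedFDerivWithin ℝ i f s) s (c + L x)).comp L))
        ((fun ν : Q => c + L ν) ⁻¹' s) x :=
      Φ.hasFDerivAt.comp_hasFDerivWithinAt x hcomp
    have heq : fderivWithin ℝ (iteratedFDerivWithin ℝ i (fun ν => f (c + L ν))
        ((fun ν : Q => c + L ν) ⁻¹' s)) ((fun ν : Q => c + L ν) ⁻¹' s) x =
        Φ.comp ((fderivWithin ℝ (iteratedFDerivWithin ℝ i f s) s (c + L x)).comp L) := by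
      have hcg := fderivWithin_congr' (𝕜 := ℝ) (fun y (hy : y ∈ (fun ν : Q => c + L ν) ⁻¹' s) =>
        (IH y hy).trans
          (ContinuousMultilinearMap.compContinuousLinearMapL_apply
            (fun _ : Fin i => L) (iteratedFDerivWithin ℝ i f s (c + L y))).symm) hx
      rw [hcg, hcomp2.fderivWithin (htu x hx)]
    rw [heq]
    rfl

variable {α : Type} [MeasurableSpace α]

theorem aesm_of_d0 {vμ : Measure α} {Γ : Set Q} {h : α → Q → V} {μ : Q}
    (hm : AEStronglyMeasurable
      (fun z => iteratedFDerivWithin ℝ 0 (h z) Γ μ) vμ) :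
    AEStronglyMeasurable (fun z => h z μ) vμ := by
  have he : (fun z => h z μ) = fun z =>
      (continuousMultilinearCurryFin0 ℝ Q V) (iteratedFDerivWithin ℝ 0 (h z) Γ μ) := by
    funext z
    rw [iteratedFDerivWithin_zero_eq_comp]
    simp
  rw [he]
  exact (continuousMultilinearCurryFin0 ℝ Q V).continuous.comp_aestronglyMeasurable hm

theorem integrable_d {vμ : Measure α} {Γ : Set Q} {h : α → Q → V} {μ : Q} {j : ℕ}
    (hm : AEStronglyMeasurable (fun z => iteratedFDerivWithin ℝ j (h z) Γ μ) vμ)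
    (hb : ∃ ε > 0, Metric.ball μ ε ⊆ Γ ∧ ∃ bound : α → ℝ, Integrable bound vμ ∧
      ∀ z, ∀ ν ∈ Metric.ball μ ε, ‖iteratedFDerivWithin ℝ j (h z) Γ ν‖ ≤ bound z) :
    Integrable (fun z => iteratedFDerivWithin ℝ j (h z) Γ μ) vμ := by
  obtain ⟨ε, hε, -, bound, hbi, hbb⟩ := hb
  exact hbi.mono' hm (Filter.Eventually.of_forall fun z => hbb z μ (mem_ball_self hε))

theorem integrable_h {vμ : Measure α} {Γ : Set Q} {h : α → Q → V} {μ : Q}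
    (hm : AEStronglyMeasurable (fun z => iteratedFDerivWithin ℝ 0 (h z) Γ μ) vμ)
    (hb : ∃ ε > 0, Metric.ball μ ε ⊆ Γ ∧ ∃ bound : α → ℝ, Integrable bound vμ ∧
      ∀ z, ∀ ν ∈ Metric.ball μ ε, ‖iteratedFDerivWithin ℝ 0 (h z) Γ ν‖ ≤ bound z) :
    Integrable (fun z => h z μ) vμ := by
  obtain ⟨ε, hε, -, bound, hbi, hbb⟩ := hb
  refine hbi.mono' (aesm_of_d0 hm) (Filter.Eventually.of_forall fun z => ?_)
  rw [← norm_iteratedFDerivWithin_zero (𝕜 := ℝ) (f := h z) (s := Γ) (x := μ)]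
  exact hbb z μ (mem_ball_self hε)

theorem smooth_param_integral {vμ : Measure α} {Γ : Set Q} (hΓ : IsOpen Γ) :
    ∀ (k : ℕ) (V : Type) (_ : NormedAddCommGroup V),
      ∀ (_ : NormedSpace ℝ V) (_ : CompleteSpace V) (h : α → Q → V),
      (∀ z, ContDiffOn ℝ (⊤ : ℕ∞) (h z) Γ) →
      (∀ j : ℕ, ∀ μ ∈ Γ, AEStronglyMeasurable
        (fun z => iteratedFDerivWithin ℝ j (h z) Γ μ) vμ) →
      (∀ j : ℕ, ∀ μ₀ ∈ Γ, ∃ ε > 0, Metric.ball μ₀ ε ⊆ Γ ∧ ∃ bound : α → ℝ,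
        Integrable bound vμ ∧ ∀ z, ∀ μ ∈ Metric.ball μ₀ ε,
          ‖iteratedFDerivWithin ℝ j (h z) Γ μ‖ ≤ bound z) →
      ContDiffOn ℝ k (fun μ => ∫ z, h z μ ∂vμ) Γ ∧
      ∀ μ ∈ Γ, iteratedFDerivWithin ℝ k (fun μ' => ∫ z, h z μ' ∂vμ) Γ μ =
        ∫ z, iteratedFDerivWithin ℝ k (h z) Γ μ ∂vμ := by
  have hΓU : UniqueDiffOn ℝ Γ := hΓ.uniqueDiffOn
  intro k
  induction k with
  | zero =>
    intro V _ _ _ h h1 h2 h3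
    constructor
    · rw [show ((0 : ℕ) : WithTop ℕ∞) = 0 from rfl, contDiffOn_zero]
      intro μ₀ hμ₀
      obtain ⟨ε, hε, hball, bound, hbi, hb⟩ := h3 0 μ₀ hμ₀
      refine (continuousAt_of_dominated ?_ ?_ hbi ?_).continuousWithinAt
      · filter_upwards [hΓ.mem_nhds hμ₀] with μ hμ
        exact aesm_of_d0 (h2 0 μ hμ)
      · filter_upwards [Metric.ball_mem_nhds μ₀ hε] with μ hμ
        refine Filter.Eventually.of_forall fun z => ?_
        have := hb z μ hμ
        rwa [norm_iteratedFDerivWithin_zero] at this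
      · exact Filter.Eventually.of_forall fun z =>
          ((h1 z).continuousOn.continuousAt (hΓ.mem_nhds hμ₀))
    · intro μ hμ
      have e0 := continuousMultilinearCurryFin0 ℝ Q V
      rw [iteratedFDerivWithin_zero_eq_comp]
      have : (fun z => iteratedFDerivWithin ℝ 0 (h z) Γ μ) = fun z =>
          (continuousMultilinearCurryFin0 ℝ Q V).symm (h z μ) := by
        funext z; rw [iteratedFDerivWithin_zero_eq_comp]; rfl
      rw [this]
      have hcc := ((continuousMultilinearCurryFin0 ℝ Q V).symm.toContinuousLinearEquiv.integral_comp_comm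
        (μ := vμ) (fun z => h z μ)).symm
      simpa using hcc
  | succ k IH =>
    intro V _ _ _ h h1 h2 h3
    have hone : (1 : WithTop ℕ∞) ≤ ((⊤ : ℕ∞) : WithTop ℕ∞) := by exact_mod_cast le_top
    set G := fun μ => ∫ z, h z μ ∂vμ with hG
    set h' := fun z => fderivWithin ℝ (h z) Γ with hh'
    have h1' : ∀ z, ContDiffOn ℝ ((⊤ : ℕ∞) : WithTop ℕ∞) (h' z) Γ := fun z =>
      (h1 z).fderivWithin hΓU (by exact_mod_cast le_top)
    have key : ∀ (j : ℕ) (z : α), ∀ μ ∈ Γ,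
        iteratedFDerivWithin ℝ (j + 1) (h z) Γ μ =
          (continuousMultilinearCurryRightEquiv' ℝ j Q V).symm
            (iteratedFDerivWithin ℝ j (h' z) Γ μ) := by
      intro j z μ hμ
      rw [iteratedFDerivWithin_succ_eq_comp_right hΓU hμ]
      rfl
    have h2' : ∀ j : ℕ, ∀ μ ∈ Γ, AEStronglyMeasurable
        (fun z => iteratedFDerivWithin ℝ j (h' z) Γ μ) vμ := by
      intro j μ hμ
      have : (fun z => iteratedFDerivWithin ℝ j (h' z) Γ μ)
          = fun z => (continuousMultilinearCurryRightEquiv' ℝ j Q V)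
              (iteratedFDerivWithin ℝ (j + 1) (h z) Γ μ) := by
        funext z; rw [key j z μ hμ]; simp
      rw [this]
      exact (continuousMultilinearCurryRightEquiv' ℝ j Q V).continuous.comp_aestronglyMeasurable
        (h2 (j + 1) μ hμ)
    have h3' : ∀ j : ℕ, ∀ μ₀ ∈ Γ, ∃ ε > 0, Metric.ball μ₀ ε ⊆ Γ ∧ ∃ bound : α → ℝ,
        Integrable bound vμ ∧ ∀ z, ∀ μ ∈ Metric.ball μ₀ ε,
          ‖iteratedFDerivWithin ℝ j (h' z) Γ μ‖ ≤ bound z := by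
      intro j μ₀ hμ₀
      obtain ⟨ε, hε, hball, bound, hbi, hb⟩ := h3 (j + 1) μ₀ hμ₀
      refine ⟨ε, hε, hball, bound, hbi, fun z μ hμ => ?_⟩
      rw [norm_iteratedFDerivWithin_fderivWithin hΓU (hball hμ)]
      exact hb z μ hμ
    obtain ⟨IH1, IH2⟩ := IH (Q →L[ℝ] V) inferInstance inferInstance inferInstance h' h1' h2' h3'
    have hG' : ∀ μ₀ ∈ Γ, HasFDerivAt G (∫ z, h' z μ₀ ∂vμ) μ₀ := by
      intro μ₀ hμ₀
      obtain ⟨ε, hε, hball, bound, hbi, hb⟩ := h3 1 μ₀ hμ₀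
      apply hasFDerivAt_integral_of_dominated_of_fderiv_le (Metric.ball_mem_nhds μ₀ hε)
        (F := fun μ z => h z μ) (F' := fun μ z => h' z μ) (bound := bound)
      · filter_upwards [hΓ.mem_nhds hμ₀] with μ hμ
        exact aesm_of_d0 (h2 0 μ hμ)
      · exact integrable_h (h2 0 μ₀ hμ₀) (h3 0 μ₀ hμ₀)
      · exact aesm_of_d0 (h2' 0 μ₀ hμ₀)
      · refine Filter.Eventually.of_forall fun z μ hμ => ?_
        rw [← norm_iteratedFDerivWithin_zero (𝕜 := ℝ) (f := h' z) (s := Γ) (x := μ),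
          norm_iteratedFDerivWithin_fderivWithin hΓU (hball hμ)]
        exact hb z μ hμ
      · exact hbi
      · refine Filter.Eventually.of_forall fun z μ hμ => ?_
        have hd := (((h1 z).differentiableOn (ne_of_gt (lt_of_lt_of_le zero_lt_one hone))) μ (hball hμ)).differentiableAt
          (hΓ.mem_nhds (hball hμ))
        have : h' z μ = fderiv ℝ (h z) μ := fderivWithin_of_isOpen hΓ (hball hμ)
        rw [this]
        exact hd.hasFDerivAt
    have hdOn : DifferentiableOn ℝ G Γ := fun μ hμ =>
      ((hG' μ hμ).differentiableAt).differentiableWithinAt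
    have hfd : ∀ μ ∈ Γ, fderivWithin ℝ G Γ μ = ∫ z, h' z μ ∂vμ := fun μ hμ => by
      rw [fderivWithin_of_isOpen hΓ hμ]
      exact (hG' μ hμ).fderiv
    constructor
    · have hcast : (((k + 1 : ℕ)) : WithTop ℕ∞) = (k : WithTop ℕ∞) + 1 := by push_cast; rfl
      rw [hcast]
      refine (contDiffOn_succ_iff_fderivWithin hΓU).2 ⟨hdOn, ?_, IH1.congr hfd⟩
      intro hk
      exact absurd hk (by simp)
    · intro μ hμ
      calc iteratedFDerivWithin ℝ (k + 1) G Γ μ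
          = (continuousMultilinearCurryRightEquiv' ℝ k Q V).symm
            (∫ z, iteratedFDerivWithin ℝ k (h' z) Γ μ ∂vμ) := by
            rw [iteratedFDerivWithin_succ_eq_comp_right hΓU hμ, Function.comp_apply,
              iteratedFDerivWithin_congr hfd hμ, IH2 μ hμ]
        _ = ∫ z, (continuousMultilinearCurryRightEquiv' ℝ k Q V).symm
              (iteratedFDerivWithin ℝ k (h' z) Γ μ) ∂vμ := by
            have := ((continuousMultilinearCurryRightEquiv' ℝ k Q V).symm.toContinuousLinearEquiv.integral_comp_comm
              (μ := vμ) (fun z => iteratedFDerivWithin ℝ k (h' z) Γ μ)).symm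
            simpa using this
        _ = ∫ z, iteratedFDerivWithin ℝ (k + 1) (h z) Γ μ ∂vμ :=
            integral_congr_ae (Filter.Eventually.of_forall fun z => (key k z μ hμ).symm)

end Stmt5Aux

theorem one_add_sq_rpow_le {r s : ℝ} (hr : 0 ≤ r) (hs : s ≤ 0) :
    (1 + r ^ 2) ^ s ≤ 2 ^ (-s) * (1 + r) ^ (2 * s) := by
  have h1 : ((1 + r) ^ 2) / 2 ≤ 1 + r ^ 2 := by nlinarith [sq_nonneg (1 - r)]
  have h2 : (0:ℝ) < ((1 + r) ^ 2) / 2 := by positivity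
  calc (1 + r ^ 2) ^ s ≤ (((1 + r) ^ 2) / 2) ^ s := rpow_le_rpow_of_nonpos h2 h1 hs
    _ = 2 ^ (-s) * (1 + r) ^ (2 * s) := by
        rw [Real.div_rpow (by positivity) (by norm_num), ← Real.rpow_natCast (1 + r) 2,
          ← Real.rpow_mul (by positivity), Real.rpow_neg (by norm_num)]
        push_cast
        ring_nf

theorem integrable_pow_base (n : ℕ) {s : ℝ} (hs : (n : ℝ) < -(2 * s)) :
    Integrable (fun ξ : EuclideanSpace ℝ (Fin n) => (1 + ‖ξ‖ ^ 2) ^ s) := by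
  have hs0 : s ≤ 0 := by
    rcases le_or_gt s 0 with h | h
    · exact h
    · nlinarith [Nat.cast_nonneg (α := ℝ) n]
  have hint : Integrable (fun ξ : EuclideanSpace ℝ (Fin n) => (1 + ‖ξ‖) ^ (-(-(2*s)))) :=
    integrable_one_add_norm (by rwa [finrank_euclideanSpace_fin])
  refine ((hint.const_mul ((2:ℝ) ^ (-s))).mono' ?_ ?_)
  · apply Continuous.aestronglyMeasurable
    exact (continuous_const.add ((continuous_norm).pow 2)).rpow_const
      (fun ξ => Or.inl (by positivity : (1:ℝ) + ‖ξ‖ ^ 2 ≠ 0))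
  · refine Filter.Eventually.of_forall fun ξ => ?_
    rw [Real.norm_of_nonneg (Real.rpow_nonneg (by positivity) _), neg_neg]
    exact one_add_sq_rpow_le (norm_nonneg ξ) hs0

theorem scaled_integral (n : ℕ) (s R : ℝ) (hR : 0 ≤ R) :
    ∫ ξ : EuclideanSpace ℝ (Fin n), (1 + ‖ξ‖ ^ 2 + R ^ 2) ^ s
      = (1 + R ^ 2) ^ (s + n / 2) *
        ∫ ξ : EuclideanSpace ℝ (Fin n), (1 + ‖ξ‖ ^ 2) ^ s := by
  set c : ℝ := Real.sqrt (1 + R ^ 2) with hcdef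
  have h1R : (0:ℝ) < 1 + R ^ 2 := by positivity
  have hc : 0 < c := Real.sqrt_pos.2 h1R
  have hc2 : c ^ 2 = 1 + R ^ 2 := Real.sq_sqrt h1R.le
  have key := MeasureTheory.Measure.integral_comp_smul
    (volume : Measure (EuclideanSpace ℝ (Fin n)))
    (fun ξ : EuclideanSpace ℝ (Fin n) => (1 + ‖ξ‖ ^ 2 + R ^ 2) ^ s) c
  have heq : ∀ ξ : EuclideanSpace ℝ (Fin n),
      (1 + ‖c • ξ‖ ^ 2 + R ^ 2) ^ s = (1 + R ^ 2) ^ s * (1 + ‖ξ‖ ^ 2) ^ s := by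
    intro ξ
    have hbase : 1 + ‖c • ξ‖ ^ 2 + R ^ 2 = (1 + R ^ 2) * (1 + ‖ξ‖ ^ 2) := by
      rw [norm_smul, Real.norm_of_nonneg hc.le, mul_pow]
      nlinarith [hc2]
    rw [hbase, Real.mul_rpow h1R.le (by positivity)]
  simp only [heq] at key
  rw [MeasureTheory.integral_const_mul, finrank_euclideanSpace_fin] at key
  have hcn : |((c ^ n : ℝ))⁻¹| = (c ^ n)⁻¹ := abs_of_pos (by positivity)
  rw [hcn, smul_eq_mul] at key
  have hcnpos : (0:ℝ) < c ^ n := by positivity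
  have : ∫ ξ : EuclideanSpace ℝ (Fin n), (1 + ‖ξ‖ ^ 2 + R ^ 2) ^ s
      = c ^ n * ((1 + R ^ 2) ^ s * ∫ ξ : EuclideanSpace ℝ (Fin n), (1 + ‖ξ‖ ^ 2) ^ s) := by
    field_simp at key ⊢
    linarith [key]
  rw [this]
  have hcn2 : (c : ℝ) ^ n = (1 + R ^ 2) ^ ((n : ℝ) / 2) := by
    rw [hcdef, Real.sqrt_eq_rpow, ← Real.rpow_natCast ((1 + R ^ 2) ^ ((1:ℝ)/2)) n,
      ← Real.rpow_mul h1R.le]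
    ring_nf
  rw [hcn2, ← mul_assoc, ← Real.rpow_add h1R]
  ring_nf

end

end

noncomputable section

open MeasureTheory

set_option maxHeartbeats 1000000
set_option synthInstance.maxHeartbeats 400000

/-- let `m + n < 0`, `K ⊆ ℝ^n` compact, `Γ ⊆ ℝ^q` an open cone,
and let `a(x,ξ,μ)` be smooth, vanishing for `x ∉ K`, with the parametric
symbol estimates `‖∂^k_{(ξ,μ)} a(x,ξ,μ)‖ ≤ C (1+|ξ|²+|μ|²)^{(m-k)/2}` for
`x ∈ K`, `ξ ∈ ℝ^n`, `μ ∈ L^c` (`L ⊆ Γ` compact).  Then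
`F(μ) = ∫∫ a(x,ξ,μ) dx dξ` converges absolutely, is smooth on `Γ`, and
satisfies `‖∂^k F(μ)‖ ≤ C' (1+|μ|)^{m+n-k}` on each `L^c`. -/
theorem stmt_5 (n q : ℕ) (hn : 1 ≤ n) (hq : 1 ≤ q)
    (Γ : Set (EuclideanSpace ℝ (Fin q))) (hΓopen : IsOpen Γ)
    (hΓne : Γ.Nonempty) (hΓcone : ∀ μ ∈ Γ, ∀ t : ℝ, 0 < t → t • μ ∈ Γ)
    (K : Set (EuclideanSpace ℝ (Fin n))) (hK : IsCompact K)
    (m : ℝ) (hm : m + n < 0)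
    (a : EuclideanSpace ℝ (Fin n) →
      EuclideanSpace ℝ (Fin n) × EuclideanSpace ℝ (Fin q) → ℂ)
    (ha_smooth : ContDiffOn ℝ (⊤ : ℕ∞)
      (fun z : EuclideanSpace ℝ (Fin n) ×
        (EuclideanSpace ℝ (Fin n) × EuclideanSpace ℝ (Fin q)) => a z.1 z.2)
      (Set.univ ×ˢ Set.univ ×ˢ Γ))
    (ha_supp : ∀ x ∉ K, ∀ ξμ, a x ξμ = 0)
    (ha_est : ∀ (k : ℕ) (L : Set (EuclideanSpace ℝ (Fin q))), L ⊆ Γ →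
      IsCompact L → ∃ C : ℝ, ∀ x ∈ K, ∀ ξ : EuclideanSpace ℝ (Fin n),
        ∀ μ ∈ L, ∀ t : ℝ, 1 ≤ t →
          ‖iteratedFDerivWithin ℝ k (a x) (Set.univ ×ˢ Γ) (ξ, t • μ)‖
            ≤ C * (1 + ‖ξ‖ ^ 2 + ‖t • μ‖ ^ 2) ^ ((m - k) / 2))
    (F : EuclideanSpace ℝ (Fin q) → ℂ)
    (hF : F = fun μ => ∫ ξ : EuclideanSpace ℝ (Fin n),
      ∫ x : EuclideanSpace ℝ (Fin n), a x (ξ, μ)) :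
    (∀ μ ∈ Γ, Integrable (fun z : EuclideanSpace ℝ (Fin n) ×
      EuclideanSpace ℝ (Fin n) => a z.2 (z.1, μ))) ∧
    ContDiffOn ℝ (⊤ : ℕ∞) F Γ ∧
    (∀ (k : ℕ) (L : Set (EuclideanSpace ℝ (Fin q))), L ⊆ Γ → IsCompact L →
      ∃ C' : ℝ, ∀ μ ∈ L, ∀ t : ℝ, 1 ≤ t →
        ‖iteratedFDerivWithin ℝ k F Γ (t • μ)‖
          ≤ C' * (1 + ‖t • μ‖) ^ (m + n - k)) := by
  classical
  have hΓU : UniqueDiffOn ℝ Γ := hΓopen.uniqueDiffOn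
  have hm0 : m < 0 := by
    have : (1:ℝ) ≤ n := by exact_mod_cast hn
    linarith
  -- smoothness of slices (x fixed)
  have hax : ∀ x : EuclideanSpace ℝ (Fin n), ContDiffOn ℝ (⊤ : ℕ∞) (a x) (Set.univ ×ˢ Γ) := by
    intro x
    have hre : a x = (fun w : EuclideanSpace ℝ (Fin n) × (EuclideanSpace ℝ (Fin n) × EuclideanSpace ℝ (Fin q)) => a w.1 w.2) ∘ (fun w : EuclideanSpace ℝ (Fin n) × EuclideanSpace ℝ (Fin q) => (x, w)) := rfl
    rw [hre]
    exact ha_smooth.comp (contDiff_const.prodMk contDiff_id).contDiffOn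
      (fun w hw => ⟨trivial, hw⟩)
  have h1 : ∀ z : EuclideanSpace ℝ (Fin n) × EuclideanSpace ℝ (Fin n), ContDiffOn ℝ (⊤ : ℕ∞) ((fun (z : EuclideanSpace ℝ (Fin n) × EuclideanSpace ℝ (Fin n)) (ν : EuclideanSpace ℝ (Fin q)) => a z.2 (z.1, ν)) z) Γ := by
    intro z
    have hre : (fun (z : EuclideanSpace ℝ (Fin n) × EuclideanSpace ℝ (Fin n)) (ν : EuclideanSpace ℝ (Fin q)) => a z.2 (z.1, ν)) z = (a z.2) ∘ (fun ν : EuclideanSpace ℝ (Fin q) => (z.1, ν)) := rfl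
    rw [hre]
    exact (hax z.2).comp (contDiff_const.prodMk contDiff_id).contDiffOn
      (fun ν hν => ⟨trivial, hν⟩)
  -- slice formula in (ξ, ν) variables
  have hslice : ∀ (j : ℕ) (x ξ : EuclideanSpace ℝ (Fin n)), ∀ ν ∈ Γ,
      iteratedFDerivWithin ℝ j (fun ν' => a x (ξ, ν')) Γ ν =
        (iteratedFDerivWithin ℝ j (a x) (Set.univ ×ˢ Γ) (ξ, ν)).compContinuousLinearMap
          (fun _ => ContinuousLinearMap.inr ℝ (EuclideanSpace ℝ (Fin n)) (EuclideanSpace ℝ (Fin q))) := by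
    intro j x ξ ν hν
    have hset : ((fun ν' : EuclideanSpace ℝ (Fin q) => ((ξ, (0 : EuclideanSpace ℝ (Fin q))) + ContinuousLinearMap.inr ℝ (EuclideanSpace ℝ (Fin n)) (EuclideanSpace ℝ (Fin q)) ν'))
        ⁻¹' (Set.univ ×ˢ Γ)) = Γ := by
      ext ν'; simp
    have key := Stmt5Aux.iteratedFDerivWithin_comp_affine (isOpen_univ.prod hΓopen) (hax x)
      (ξ, (0 : EuclideanSpace ℝ (Fin q))) (ContinuousLinearMap.inr ℝ (EuclideanSpace ℝ (Fin n)) (EuclideanSpace ℝ (Fin q))) j ν (by rw [hset]; exact hν)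
    rw [hset] at key
    simpa using key
  -- vanishing outside K
  have hzero : ∀ (j : ℕ) (z : EuclideanSpace ℝ (Fin n) × EuclideanSpace ℝ (Fin n)), z.2 ∉ K → ∀ ν ∈ Γ,
      iteratedFDerivWithin ℝ j ((fun (z : EuclideanSpace ℝ (Fin n) × EuclideanSpace ℝ (Fin n)) (ν : EuclideanSpace ℝ (Fin q)) => a z.2 (z.1, ν)) z) Γ ν = 0 := by
    intro j z hz ν hν
    have hre : (fun (z : EuclideanSpace ℝ (Fin n) × EuclideanSpace ℝ (Fin n)) (ν : EuclideanSpace ℝ (Fin q)) => a z.2 (z.1, ν)) z = fun _ => (0 : ℂ) := funext fun ν' => ha_supp z.2 hz _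
    rw [hre]
    exact congrFun iteratedFDerivWithin_zero_fun ν
  -- norm comparison with the joint derivative
  have hinr : ‖ContinuousLinearMap.inr ℝ (EuclideanSpace ℝ (Fin n)) (EuclideanSpace ℝ (Fin q))‖ ≤ 1 := by
    refine ContinuousLinearMap.opNorm_le_bound _ zero_le_one (fun ν => ?_)
    rw [one_mul, ContinuousLinearMap.inr_apply, Prod.norm_def]
    simp [max_eq_right (norm_nonneg ν)]
  have hns : ∀ (j : ℕ) (z : EuclideanSpace ℝ (Fin n) × EuclideanSpace ℝ (Fin n)), ∀ ν ∈ Γ,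
      ‖iteratedFDerivWithin ℝ j ((fun (z : EuclideanSpace ℝ (Fin n) × EuclideanSpace ℝ (Fin n)) (ν : EuclideanSpace ℝ (Fin q)) => a z.2 (z.1, ν)) z) Γ ν‖ ≤
        ‖iteratedFDerivWithin ℝ j (a z.2) (Set.univ ×ˢ Γ) (z.1, ν)‖ := by
    intro j z ν hν
    rw [show (fun (z : EuclideanSpace ℝ (Fin n) × EuclideanSpace ℝ (Fin n)) (ν : EuclideanSpace ℝ (Fin q)) => a z.2 (z.1, ν)) z = fun ν' => a z.2 (z.1, ν') from rfl, hslice j z.2 z.1 ν hν]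
    refine (ContinuousMultilinearMap.norm_compContinuousLinearMap_le _ _).trans ?_
    refine mul_le_of_le_one_right (norm_nonneg _) ?_
    exact Finset.prod_le_one (fun _ _ => norm_nonneg _) (fun _ _ => hinr)
  -- measurability
  have hA3 : ContDiffOn ℝ (⊤ : ℕ∞) (fun w : (EuclideanSpace ℝ (Fin n) × EuclideanSpace ℝ (Fin n)) × EuclideanSpace ℝ (Fin q) => a w.1.2 (w.1.1, w.2))
      ((Set.univ : Set (EuclideanSpace ℝ (Fin n) × EuclideanSpace ℝ (Fin n))) ×ˢ Γ) := by
    have hre : (fun w : (EuclideanSpace ℝ (Fin n) × EuclideanSpace ℝ (Fin n)) × EuclideanSpace ℝ (Fin q) => a w.1.2 (w.1.1, w.2)) =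
        (fun w : EuclideanSpace ℝ (Fin n) × (EuclideanSpace ℝ (Fin n) × EuclideanSpace ℝ (Fin q)) => a w.1 w.2) ∘
          (fun w : (EuclideanSpace ℝ (Fin n) × EuclideanSpace ℝ (Fin n)) × EuclideanSpace ℝ (Fin q) => (w.1.2, (w.1.1, w.2))) := rfl
    rw [hre]
    exact ha_smooth.comp
      (((contDiff_snd.comp contDiff_fst).prodMk
        ((contDiff_fst.comp contDiff_fst).prodMk contDiff_snd)).contDiffOn)
      (fun w hw => ⟨trivial, trivial, hw.2⟩)
  have hslice3 : ∀ (j : ℕ) (z : EuclideanSpace ℝ (Fin n) × EuclideanSpace ℝ (Fin n)), ∀ ν ∈ Γ,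
      iteratedFDerivWithin ℝ j ((fun (z : EuclideanSpace ℝ (Fin n) × EuclideanSpace ℝ (Fin n)) (ν : EuclideanSpace ℝ (Fin q)) => a z.2 (z.1, ν)) z) Γ ν =
        (iteratedFDerivWithin ℝ j (fun w : (EuclideanSpace ℝ (Fin n) × EuclideanSpace ℝ (Fin n)) × EuclideanSpace ℝ (Fin q) => a w.1.2 (w.1.1, w.2))
            ((Set.univ : Set (EuclideanSpace ℝ (Fin n) × EuclideanSpace ℝ (Fin n))) ×ˢ Γ) (z, ν)).compContinuousLinearMap
          (fun _ => ContinuousLinearMap.inr ℝ (EuclideanSpace ℝ (Fin n) × EuclideanSpace ℝ (Fin n)) (EuclideanSpace ℝ (Fin q))) := by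
    intro j z ν hν
    have hset : ((fun ν' : EuclideanSpace ℝ (Fin q) => ((z, (0 : EuclideanSpace ℝ (Fin q))) + ContinuousLinearMap.inr ℝ (EuclideanSpace ℝ (Fin n) × EuclideanSpace ℝ (Fin n)) (EuclideanSpace ℝ (Fin q)) ν'))
        ⁻¹' ((Set.univ : Set (EuclideanSpace ℝ (Fin n) × EuclideanSpace ℝ (Fin n))) ×ˢ Γ)) = Γ := by
      ext ν'; simp
    have key := Stmt5Aux.iteratedFDerivWithin_comp_affine (isOpen_univ.prod hΓopen) hA3
      (z, (0 : EuclideanSpace ℝ (Fin q))) (ContinuousLinearMap.inr ℝ (EuclideanSpace ℝ (Fin n) × EuclideanSpace ℝ (Fin n)) (EuclideanSpace ℝ (Fin q))) j ν (by rw [hset]; exact hν)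
    rw [hset] at key
    simpa using key
  have hmeas : ∀ (j : ℕ), ∀ ν ∈ Γ, AEStronglyMeasurable
      (fun z : EuclideanSpace ℝ (Fin n) × EuclideanSpace ℝ (Fin n) => iteratedFDerivWithin ℝ j ((fun (z : EuclideanSpace ℝ (Fin n) × EuclideanSpace ℝ (Fin n)) (ν : EuclideanSpace ℝ (Fin q)) => a z.2 (z.1, ν)) z) Γ ν) volume := by
    intro j ν hν
    have hcont : ContinuousOn
        (iteratedFDerivWithin ℝ j (fun w : (EuclideanSpace ℝ (Fin n) × EuclideanSpace ℝ (Fin n)) × EuclideanSpace ℝ (Fin q) => a w.1.2 (w.1.1, w.2))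
          ((Set.univ : Set (EuclideanSpace ℝ (Fin n) × EuclideanSpace ℝ (Fin n))) ×ˢ Γ)) ((Set.univ : Set (EuclideanSpace ℝ (Fin n) × EuclideanSpace ℝ (Fin n))) ×ˢ Γ) :=
      hA3.continuousOn_iteratedFDerivWithin (by exact_mod_cast le_top)
        (isOpen_univ.prod hΓopen).uniqueDiffOn
    have hc2 : Continuous (fun z : EuclideanSpace ℝ (Fin n) × EuclideanSpace ℝ (Fin n) =>
        iteratedFDerivWithin ℝ j (fun w : (EuclideanSpace ℝ (Fin n) × EuclideanSpace ℝ (Fin n)) × EuclideanSpace ℝ (Fin q) => a w.1.2 (w.1.1, w.2))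
          ((Set.univ : Set (EuclideanSpace ℝ (Fin n) × EuclideanSpace ℝ (Fin n))) ×ˢ Γ) (z, ν)) :=
      hcont.comp_continuous (continuous_id.prodMk continuous_const)
        (fun z => ⟨trivial, hν⟩)
    have hΦ : Continuous fun (g : ContinuousMultilinearMap ℝ (fun _ : Fin j => (EuclideanSpace ℝ (Fin n) × EuclideanSpace ℝ (Fin n)) × EuclideanSpace ℝ (Fin q)) ℂ) =>
        g.compContinuousLinearMap (fun _ : Fin j => ContinuousLinearMap.inr ℝ (EuclideanSpace ℝ (Fin n) × EuclideanSpace ℝ (Fin n)) (EuclideanSpace ℝ (Fin q))) :=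
      (ContinuousMultilinearMap.compContinuousLinearMapL
        (fun _ : Fin j => ContinuousLinearMap.inr ℝ (EuclideanSpace ℝ (Fin n) × EuclideanSpace ℝ (Fin n)) (EuclideanSpace ℝ (Fin q)))).continuous
    refine Continuous.aestronglyMeasurable ?_
    have heq : (fun z : EuclideanSpace ℝ (Fin n) × EuclideanSpace ℝ (Fin n) => iteratedFDerivWithin ℝ j ((fun (z : EuclideanSpace ℝ (Fin n) × EuclideanSpace ℝ (Fin n)) (ν : EuclideanSpace ℝ (Fin q)) => a z.2 (z.1, ν)) z) Γ ν) = fun z =>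
        (iteratedFDerivWithin ℝ j (fun w : (EuclideanSpace ℝ (Fin n) × EuclideanSpace ℝ (Fin n)) × EuclideanSpace ℝ (Fin q) => a w.1.2 (w.1.1, w.2))
            ((Set.univ : Set (EuclideanSpace ℝ (Fin n) × EuclideanSpace ℝ (Fin n))) ×ˢ Γ) (z, ν)).compContinuousLinearMap
          (fun _ => ContinuousLinearMap.inr ℝ (EuclideanSpace ℝ (Fin n) × EuclideanSpace ℝ (Fin n)) (EuclideanSpace ℝ (Fin q))) :=
      funext fun z => hslice3 j z ν hν
    rw [heq]
    exact hΦ.comp hc2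
  -- local uniform integrable bounds
  have hH3 : ∀ (j : ℕ), ∀ μ₀ ∈ Γ, ∃ ε > 0, Metric.ball μ₀ ε ⊆ Γ ∧ ∃ bound : EuclideanSpace ℝ (Fin n) × EuclideanSpace ℝ (Fin n) → ℝ,
      Integrable bound ∧ ∀ z, ∀ ν ∈ Metric.ball μ₀ ε,
        ‖iteratedFDerivWithin ℝ j ((fun (z : EuclideanSpace ℝ (Fin n) × EuclideanSpace ℝ (Fin n)) (ν : EuclideanSpace ℝ (Fin q)) => a z.2 (z.1, ν)) z) Γ ν‖ ≤ bound z := by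
    intro j μ₀ hμ₀
    obtain ⟨ε, hε, hball⟩ := Metric.isOpen_iff.1 hΓopen μ₀ hμ₀
    obtain ⟨C, hC⟩ := ha_est j (Metric.closedBall μ₀ (ε / 2))
      ((Metric.closedBall_subset_ball (by linarith)).trans hball) (isCompact_closedBall _ _)
    have hsneg : (m - (j : ℝ)) / 2 ≤ 0 := by
      have : (0:ℝ) ≤ j := Nat.cast_nonneg j
      linarith
    refine ⟨ε / 2, by linarith, (Metric.ball_subset_ball (by linarith)).trans hball,
      fun z => (max C 0 * (1 + ‖z.1‖ ^ 2) ^ ((m - (j : ℝ)) / 2)) *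
        Set.indicator K (fun _ => (1 : ℝ)) z.2, ?_, ?_⟩
    · have hfint : Integrable (fun ξ : EuclideanSpace ℝ (Fin n) =>
          max C 0 * (1 + ‖ξ‖ ^ 2) ^ ((m - (j : ℝ)) / 2)) := by
        refine (integrable_pow_base n ?_).const_mul _
        have hj : (0:ℝ) ≤ j := Nat.cast_nonneg j
        nlinarith
      have hgint : Integrable (Set.indicator K (fun _ => (1:ℝ))) :=
        (integrable_indicator_iff hK.measurableSet).2
          (integrableOn_const hK.measure_lt_top.ne)
      rw [MeasureTheory.Measure.volume_eq_prod]
      exact hfint.mul_prod hgint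
    · intro z ν hν
      have hνΓ : ν ∈ Γ := hball (Metric.ball_subset_ball (by linarith) hν)
      by_cases hzK : z.2 ∈ K
      · simp only [Set.indicator_of_mem hzK, mul_one]
        refine (hns j z ν hνΓ).trans ?_
        have h1ν := hC z.2 hzK z.1 ν (Metric.ball_subset_closedBall hν) 1 le_rfl
        rw [one_smul] at h1ν
        refine h1ν.trans ?_
        have hbase : (1 + ‖z.1‖ ^ 2 + ‖ν‖ ^ 2 : ℝ) ^ ((m - (j : ℝ)) / 2) ≤
            (1 + ‖z.1‖ ^ 2) ^ ((m - (j : ℝ)) / 2) := by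
          refine Real.rpow_le_rpow_of_nonpos (by positivity) ?_ hsneg
          nlinarith [sq_nonneg ‖ν‖]
        refine mul_le_mul (le_max_left _ _) hbase (by positivity) (le_max_right _ _)
      · rw [hzero j z hzK ν hνΓ]
        simp [Set.indicator_of_notMem hzK]
  -- the main parametric-integral machine
  have main := fun k : ℕ => Stmt5Aux.smooth_param_integral (vμ := (volume : Measure (EuclideanSpace ℝ (Fin n) × EuclideanSpace ℝ (Fin n))))
    hΓopen k ℂ inferInstance inferInstance inferInstance (fun (z : EuclideanSpace ℝ (Fin n) × EuclideanSpace ℝ (Fin n)) (ν : EuclideanSpace ℝ (Fin q)) => a z.2 (z.1, ν)) h1 hmeas hH3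
  -- Conclusion 1 : integrability
  have hInt : ∀ μ ∈ Γ, Integrable (fun z : EuclideanSpace ℝ (Fin n) × EuclideanSpace ℝ (Fin n) => a z.2 (z.1, μ)) := fun μ hμ =>
    Stmt5Aux.integrable_h (hmeas 0 μ hμ) (hH3 0 μ hμ)
  -- F agrees with the product-integral on Γ
  have hFG : Set.EqOn F (fun ν => ∫ z : EuclideanSpace ℝ (Fin n) × EuclideanSpace ℝ (Fin n), (fun (z : EuclideanSpace ℝ (Fin n) × EuclideanSpace ℝ (Fin n)) (ν : EuclideanSpace ℝ (Fin q)) => a z.2 (z.1, ν)) z ν) Γ := by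
    intro μ hμ
    have hi := hInt μ hμ
    rw [MeasureTheory.Measure.volume_eq_prod] at hi
    calc F μ = ∫ ξ : EuclideanSpace ℝ (Fin n), ∫ x : EuclideanSpace ℝ (Fin n), a x (ξ, μ) := by rw [hF]
      _ = ∫ z : EuclideanSpace ℝ (Fin n) × EuclideanSpace ℝ (Fin n), a z.2 (z.1, μ) ∂(((volume : Measure (EuclideanSpace ℝ (Fin n))).prod volume)) :=
          MeasureTheory.integral_integral hi
      _ = ∫ z : EuclideanSpace ℝ (Fin n) × EuclideanSpace ℝ (Fin n), (fun (z : EuclideanSpace ℝ (Fin n) × EuclideanSpace ℝ (Fin n)) (ν : EuclideanSpace ℝ (Fin q)) => a z.2 (z.1, ν)) z μ := by rw [← MeasureTheory.Measure.volume_eq_prod]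
  have hCD : ContDiffOn ℝ (⊤ : ℕ∞) F Γ :=
    contDiffOn_infty.2 fun k => ((main k).1).congr hFG
  refine ⟨hInt, hCD, ?_⟩
  -- Conclusion 3 : the estimates
  intro k L hLsub hLcomp
  obtain ⟨C, hC⟩ := ha_est k L hLsub hLcomp
  set I := ∫ ξ : EuclideanSpace ℝ (Fin n), (1 + ‖ξ‖ ^ 2) ^ ((m - (k : ℝ)) / 2) with hI
  have hI0 : 0 ≤ I := integral_nonneg fun ξ => Real.rpow_nonneg (by positivity) _
  have hvK0 : 0 ≤ (volume K).toReal := ENNReal.toReal_nonneg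
  refine ⟨max C 0 * I * (volume K).toReal * 2 ^ (((k : ℝ) - m - n) / 2), ?_⟩
  intro μ hμ t ht
  have hνΓ : t • μ ∈ Γ := hΓcone μ (hLsub hμ) t (by linarith)
  have hre : iteratedFDerivWithin ℝ k F Γ (t • μ) =
      ∫ z : EuclideanSpace ℝ (Fin n) × EuclideanSpace ℝ (Fin n), iteratedFDerivWithin ℝ k ((fun (z : EuclideanSpace ℝ (Fin n) × EuclideanSpace ℝ (Fin n)) (ν : EuclideanSpace ℝ (Fin q)) => a z.2 (z.1, ν)) z) Γ (t • μ) := by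
    rw [iteratedFDerivWithin_congr hFG hνΓ, (main k).2 (t • μ) hνΓ]
  rw [hre]
  have hsneg : (m - (k : ℝ)) / 2 ≤ 0 := by
    have : (0:ℝ) ≤ k := Nat.cast_nonneg k
    linarith
  have hnk : (n : ℝ) < -(2 * ((m - (k : ℝ)) / 2)) := by
    have : (0:ℝ) ≤ k := Nat.cast_nonneg k
    nlinarith
  set bnd : EuclideanSpace ℝ (Fin n) × EuclideanSpace ℝ (Fin n) → ℝ := fun z =>
    (max C 0 * (1 + ‖z.1‖ ^ 2 + ‖t • μ‖ ^ 2) ^ ((m - (k : ℝ)) / 2)) *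
      Set.indicator K (fun _ => (1 : ℝ)) z.2 with hbnd
  have hbint : Integrable bnd := by
    have hfint : Integrable (fun ξ : EuclideanSpace ℝ (Fin n) =>
        max C 0 * (1 + ‖ξ‖ ^ 2 + ‖t • μ‖ ^ 2) ^ ((m - (k : ℝ)) / 2)) := by
      refine Integrable.const_mul ?_ _
      refine (integrable_pow_base n hnk).mono' ?_ ?_
      · apply Continuous.aestronglyMeasurable
        exact (((continuous_const.add (continuous_norm.pow 2)).add
          continuous_const)).rpow_const (fun ξ => Or.inl (by positivity : (1:ℝ) + ‖ξ‖ ^ 2 + ‖t • μ‖ ^ 2 ≠ 0))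
      · refine Filter.Eventually.of_forall fun ξ => ?_
        rw [Real.norm_of_nonneg (Real.rpow_nonneg (by positivity) _)]
        refine Real.rpow_le_rpow_of_nonpos (by positivity) ?_ hsneg
        nlinarith [sq_nonneg ‖t • μ‖]
    have hgint : Integrable (Set.indicator K (fun _ => (1:ℝ))) :=
      (integrable_indicator_iff hK.measurableSet).2
        (integrableOn_const hK.measure_lt_top.ne)
    rw [hbnd, MeasureTheory.Measure.volume_eq_prod]
    exact hfint.mul_prod hgint
  have hpt : ∀ z : EuclideanSpace ℝ (Fin n) × EuclideanSpace ℝ (Fin n), ‖iteratedFDerivWithin ℝ k ((fun (z : EuclideanSpace ℝ (Fin n) × EuclideanSpace ℝ (Fin n)) (ν : EuclideanSpace ℝ (Fin q)) => a z.2 (z.1, ν)) z) Γ (t • μ)‖ ≤ bnd z := by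
    intro z
    by_cases hzK : z.2 ∈ K
    · rw [hbnd]
      simp only [Set.indicator_of_mem hzK, mul_one]
      refine (hns k z (t • μ) hνΓ).trans ?_
      refine (hC z.2 hzK z.1 μ hμ t ht).trans ?_
      exact mul_le_mul_of_nonneg_right (le_max_left _ _) (Real.rpow_nonneg (by positivity) _)
    · rw [hzero k z hzK (t • μ) hνΓ, hbnd]
      simp [Set.indicator_of_notMem hzK]
  refine (MeasureTheory.norm_integral_le_of_norm_le hbint
    (Filter.Eventually.of_forall hpt)).trans ?_
  have hval : ∫ z : EuclideanSpace ℝ (Fin n) × EuclideanSpace ℝ (Fin n), bnd z =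
      max C 0 * ((1 + ‖t • μ‖ ^ 2) ^ ((m - (k : ℝ)) / 2 + n / 2) * I) * (volume K).toReal := by
    have hsplit : ∫ z : EuclideanSpace ℝ (Fin n) × EuclideanSpace ℝ (Fin n), bnd z =
        (∫ ξ : EuclideanSpace ℝ (Fin n),
          max C 0 * (1 + ‖ξ‖ ^ 2 + ‖t • μ‖ ^ 2) ^ ((m - (k : ℝ)) / 2)) *
          ∫ x : EuclideanSpace ℝ (Fin n), Set.indicator K (fun _ => (1:ℝ)) x := by
      rw [hbnd, MeasureTheory.Measure.volume_eq_prod]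
      exact MeasureTheory.integral_prod_mul
        (f := fun ξ : EuclideanSpace ℝ (Fin n) =>
          max C 0 * (1 + ‖ξ‖ ^ 2 + ‖t • μ‖ ^ 2) ^ ((m - (k : ℝ)) / 2))
        (g := Set.indicator K (fun _ => (1:ℝ)))
    rw [hsplit, MeasureTheory.integral_const_mul,
      scaled_integral n ((m - (k : ℝ)) / 2) ‖t • μ‖ (norm_nonneg _),
      integral_indicator_const _ hK.measurableSet]
    simp only [smul_eq_mul, mul_one]
    rfl
  rw [hval]
  have hcomp : (1 + ‖t • μ‖ ^ 2 : ℝ) ^ ((m - (k : ℝ)) / 2 + n / 2) ≤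
      2 ^ (((k : ℝ) - m - n) / 2) * (1 + ‖t • μ‖) ^ (m + n - k) := by
    have hkey := one_add_sq_rpow_le (norm_nonneg (t • μ))
      (s := (m - (k : ℝ)) / 2 + n / 2) (by linarith)
    have e1 : -((m - (k : ℝ)) / 2 + n / 2) = ((k : ℝ) - m - n) / 2 := by ring
    have e2 : 2 * ((m - (k : ℝ)) / 2 + n / 2) = m + n - k := by ring
    rw [e1, e2] at hkey
    exact hkey
  calc max C 0 * ((1 + ‖t • μ‖ ^ 2) ^ ((m - (k : ℝ)) / 2 + n / 2) * I) * (volume K).toReal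
      ≤ max C 0 * ((2 ^ (((k : ℝ) - m - n) / 2) * (1 + ‖t • μ‖) ^ (m + n - k)) * I) *
        (volume K).toReal := by
        refine mul_le_mul_of_nonneg_right ?_ hvK0
        refine mul_le_mul_of_nonneg_left ?_ (le_max_right _ _)
        exact mul_le_mul_of_nonneg_right hcomp hI0
    _ = max C 0 * I * (volume K).toReal * 2 ^ (((k : ℝ) - m - n) / 2) *
        (1 + ‖t • μ‖) ^ (m + n - k) := by ring
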